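/- If (λ₁,λ₂,λ₃) is in the localizer μ-pseudo-spectrum (i.e. L_λ(A₁,A₂,A₃) has an eigenvalue of absolute value at most μ), then there exists a unit vector v̂ and real numbers giving ‖(Aⱼ - λⱼ)v̂‖ ≤ (μ² + 3δ)^{1/2} for each j ∈ {1,2,3}. -/

import Mathlib

open Matrix
open scoped Kronecker Matrix.Norms.L2Operator

noncomputable section

def pauli1 : Matrix (Fin 2) (Fin 2) ℂ := !![0, 1; 1, 0]
def pauli2 : Matrix (Fin 2) (Fin 2) ℂ := !![0, -Complex.I; Complex.I, 0]
def pauli3 : Matrix (Fin 2) (Fin 2) ℂ := !![1, 0; 0, -1]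

def localizer {N : ℕ} (A₁ A₂ A₃ : Matrix (Fin N) (Fin N) ℂ) (lam : Fin 3 → ℝ) :
    Matrix (Fin 2 × Fin N) (Fin 2 × Fin N) ℂ :=
  pauli1 ⊗ₖ (A₁ - (lam 0 : ℂ) • 1) + pauli2 ⊗ₖ (A₂ - (lam 1 : ℂ) • 1)
    + pauli3 ⊗ₖ (A₃ - (lam 2 : ℂ) • 1)

namespace LocHelper

variable {N : ℕ}

def fE (x : Fin N → ℂ) : EuclideanSpace ℂ (Fin N) := (WithLp.equiv 2 (Fin N → ℂ)).symm x

lemma ip_eq_normsq (x : Fin N → ℂ) : star x ⬝ᵥ x = ((‖fE x‖ ^ 2 : ℝ) : ℂ) := by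
  rw [dotProduct_comm, ← EuclideanSpace.inner_toLp_toLp, inner_self_eq_norm_sq_to_K, Complex.ofReal_pow]
  rfl

lemma herm_move {M : Matrix (Fin N) (Fin N) ℂ} (hM : M.IsHermitian) (x w : Fin N → ℂ) :
    star (M *ᵥ x) ⬝ᵥ w = star x ⬝ᵥ (M *ᵥ w) := by
  rw [Matrix.star_mulVec, Matrix.dotProduct_mulVec, hM.eq]

lemma cs_bound {δ : ℝ} {C : Matrix (Fin N) (Fin N) ℂ} (hC : ‖C‖ ≤ δ) (x y : Fin N → ℂ) :
    ‖star x ⬝ᵥ (C *ᵥ y)‖ ≤ δ * ‖fE x‖ * ‖fE y‖ := by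
  have h1 : ‖star x ⬝ᵥ (C *ᵥ y)‖ ≤ ‖fE x‖ * ‖fE (C *ᵥ y)‖ := by
    rw [dotProduct_comm, ← EuclideanSpace.inner_toLp_toLp]
    exact norm_inner_le_norm _ _
  have h2 : ‖fE (C *ᵥ y)‖ ≤ ‖C‖ * ‖fE y‖ := C.l2_opNorm_mulVec (fE y)
  have h3 : ‖C‖ * ‖fE y‖ ≤ δ * ‖fE y‖ :=
    mul_le_mul_of_nonneg_right hC (norm_nonneg _)
  calc ‖star x ⬝ᵥ (C *ᵥ y)‖ ≤ ‖fE x‖ * ‖fE (C *ᵥ y)‖ := h1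
    _ ≤ ‖fE x‖ * (δ * ‖fE y‖) :=
        mul_le_mul_of_nonneg_left (h2.trans h3) (norm_nonneg _)
    _ = δ * ‖fE x‖ * ‖fE y‖ := by ring

lemma re_im_bounds {z : ℂ} {b : ℝ} (h : ‖z‖ ≤ b) :
    -b ≤ z.re ∧ z.re ≤ b ∧ -b ≤ z.im ∧ z.im ≤ b := by
  have hre : |z.re| ≤ b := (Complex.abs_re_le_norm z).trans h
  have him : |z.im| ≤ b := (Complex.abs_im_le_norm z).trans h
  exact ⟨(abs_le.mp hre).1, (abs_le.mp hre).2, (abs_le.mp him).1, (abs_le.mp him).2⟩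

lemma kron_mulVec (P : Matrix (Fin 2) (Fin 2) ℂ) (B : Matrix (Fin N) (Fin N) ℂ)
    (u : Fin 2 × Fin N → ℂ) (i : Fin 2) (k : Fin N) :
    ((P ⊗ₖ B) *ᵥ u) (i, k)
      = P i 0 * (B *ᵥ fun l => u (0, l)) k + P i 1 * (B *ᵥ fun l => u (1, l)) k := by
  simp [Matrix.mulVec, dotProduct, Fintype.sum_prod_type, Fin.sum_univ_two,
    Finset.mul_sum, mul_assoc]

lemma key_identity (B0 B1 B2 : Matrix (Fin N) (Fin N) ℂ)
    (h0 : B0.IsHermitian) (h1 : B1.IsHermitian) (h2 : B2.IsHermitian)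
    (a b : Fin N → ℂ) :
    star (B2 *ᵥ a + B0 *ᵥ b - Complex.I • (B1 *ᵥ b)) ⬝ᵥ
        (B2 *ᵥ a + B0 *ᵥ b - Complex.I • (B1 *ᵥ b))
      + star (B0 *ᵥ a + Complex.I • (B1 *ᵥ a) - B2 *ᵥ b) ⬝ᵥ
        (B0 *ᵥ a + Complex.I • (B1 *ᵥ a) - B2 *ᵥ b)
      = star (B0 *ᵥ a) ⬝ᵥ (B0 *ᵥ a) + star (B1 *ᵥ a) ⬝ᵥ (B1 *ᵥ a)
        + star (B2 *ᵥ a) ⬝ᵥ (B2 *ᵥ a) + star (B0 *ᵥ b) ⬝ᵥ (B0 *ᵥ b)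
        + star (B1 *ᵥ b) ⬝ᵥ (B1 *ᵥ b) + star (B2 *ᵥ b) ⬝ᵥ (B2 *ᵥ b)
        + Complex.I * (star a ⬝ᵥ ((B0 * B1 - B1 * B0) *ᵥ a))
        - Complex.I * (star b ⬝ᵥ ((B0 * B1 - B1 * B0) *ᵥ b))
        + (star a ⬝ᵥ ((B2 * B0 - B0 * B2) *ᵥ b))
        - (star b ⬝ᵥ ((B2 * B0 - B0 * B2) *ᵥ a))
        + Complex.I * (star a ⬝ᵥ ((B1 * B2 - B2 * B1) *ᵥ b))
        + Complex.I * (star b ⬝ᵥ ((B1 * B2 - B2 * B1) *ᵥ a)) := by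
  simp only [Matrix.sub_mulVec, ← Matrix.mulVec_mulVec, star_add, star_sub, star_smul,
    Complex.star_def, Complex.conj_I, add_dotProduct, sub_dotProduct,
    smul_dotProduct, neg_dotProduct, dotProduct_neg,
    dotProduct_add, dotProduct_sub,
    dotProduct_smul, herm_move h0, herm_move h1, herm_move h2,
    smul_eq_mul, neg_mul, neg_smul]
  ring_nf
  simp only [Complex.I_sq]
  ring

end LocHelper

open LocHelper

set_option maxHeartbeats 1000000 in
/-- If `lam` lies in the localizer μ-pseudo-spectrum, there is an approximate joint
eigenvector of the matrices `A j` with eigenvalues `lam j`, up to error `(μ² + 3δ)^(1/2)`. -/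
theorem approx_joint_eigenvector_of_pseudospectrum {N : ℕ}
    (A : Fin 3 → Matrix (Fin N) (Fin N) ℂ) (hA : ∀ j, (A j).IsHermitian)
    (δ : ℝ) (hδpos : 0 < δ) (hδ : ∀ i j, ‖⁅A i, A j⁆‖ ≤ δ)
    (μ : ℝ) (hμ : 0 ≤ μ) (lam : Fin 3 → ℝ)
    (hpseudo : ∃ (c : ℝ), |c| ≤ μ ∧ ∃ u : Fin 2 × Fin N → ℂ, u ≠ 0 ∧
      (localizer (A 0) (A 1) (A 2) lam).mulVec u = (c : ℂ) • u) :
    ∃ v : EuclideanSpace ℂ (Fin N), ‖v‖ = 1 ∧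
      ∀ j, ‖((WithLp.equiv 2 (Fin N → ℂ)).symm
          ((A j - (lam j : ℂ) • 1).mulVec v))‖ ≤ (μ ^ 2 + 3 * δ) ^ ((1 : ℝ)/2) := by
  obtain ⟨c, hc, u, hu0, hu⟩ := hpseudo
  -- Hermitian shifted matrices
  have hB : ∀ j : Fin 3, (A j - (lam j : ℂ) • 1).IsHermitian := by
    intro j
    refine (hA j).sub ?_
    unfold Matrix.IsHermitian
    simp [Matrix.conjTranspose_smul]
  -- component vectors
  set a : Fin N → ℂ := fun k => u (0, k) with ha
  set b : Fin N → ℂ := fun k => u (1, k) with hb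
  -- component equations
  have hE0 : (A 2 - (lam 2 : ℂ) • 1) *ᵥ a + (A 0 - (lam 0 : ℂ) • 1) *ᵥ b
      - Complex.I • ((A 1 - (lam 1 : ℂ) • 1) *ᵥ b) = (c : ℂ) • a := by
    funext k
    have h := congrFun hu (0, k)
    have hak : u (0, k) = a k := rfl
    simp only [localizer, Matrix.add_mulVec, Pi.add_apply, kron_mulVec,
      pauli1, pauli2, pauli3, Pi.smul_apply, smul_eq_mul] at h
    simp only [Fin.isValue, Matrix.of_apply, Matrix.cons_val', Matrix.cons_val_zero,
      Matrix.cons_val_one, Matrix.head_cons, Matrix.empty_val', Matrix.cons_val_fin_one,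
      Matrix.head_fin_const, zero_mul, one_mul, neg_mul, zero_add, add_zero] at h
    simp only [Pi.add_apply, Pi.sub_apply, Pi.smul_apply, smul_eq_mul]
    linear_combination h
  have hE1 : (A 0 - (lam 0 : ℂ) • 1) *ᵥ a + Complex.I • ((A 1 - (lam 1 : ℂ) • 1) *ᵥ a)
      - (A 2 - (lam 2 : ℂ) • 1) *ᵥ b = (c : ℂ) • b := by
    funext k
    have h := congrFun hu (1, k)
    have hbk : u (1, k) = b k := rfl
    simp only [localizer, Matrix.add_mulVec, Pi.add_apply, kron_mulVec,
      pauli1, pauli2, pauli3, Pi.smul_apply, smul_eq_mul] at h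
    simp only [Fin.isValue, Matrix.of_apply, Matrix.cons_val', Matrix.cons_val_zero,
      Matrix.cons_val_one, Matrix.head_cons, Matrix.empty_val', Matrix.cons_val_fin_one,
      Matrix.head_fin_const, zero_mul, one_mul, neg_mul, zero_add, add_zero] at h
    simp only [Pi.add_apply, Pi.sub_apply, Pi.smul_apply, smul_eq_mul]
    linear_combination h
  -- the key identity
  have KI := key_identity (A 0 - (lam 0 : ℂ) • 1) (A 1 - (lam 1 : ℂ) • 1)
    (A 2 - (lam 2 : ℂ) • 1) (hB 0) (hB 1) (hB 2) a b
  rw [hE0, hE1] at KI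
  simp only [star_smul, smul_dotProduct, dotProduct_smul, Complex.star_def,
    Complex.conj_ofReal, smul_eq_mul, ip_eq_normsq] at KI
  -- commutator norms
  have hcomm : ∀ i j : Fin 3, ‖(A i - (lam i : ℂ) • 1) * (A j - (lam j : ℂ) • 1)
      - (A j - (lam j : ℂ) • 1) * (A i - (lam i : ℂ) • 1)‖ ≤ δ := by
    intro i j
    have : (A i - (lam i : ℂ) • 1) * (A j - (lam j : ℂ) • 1)
        - (A j - (lam j : ℂ) • 1) * (A i - (lam i : ℂ) • 1) = ⁅A i, A j⁆ := by
      rw [Ring.lie_def]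
      simp only [sub_mul, mul_sub, smul_mul_assoc, mul_smul_comm, one_mul, mul_one, smul_smul]
      module
    rw [this]
    exact hδ i j
  -- bounds on the six cross terms
  obtain ⟨h1a, h1b, h1c, h1d⟩ := re_im_bounds (cs_bound (hcomm 0 1) a a)
  obtain ⟨h2a, h2b, h2c, h2d⟩ := re_im_bounds (cs_bound (hcomm 0 1) b b)
  obtain ⟨h3a, h3b, h3c, h3d⟩ := re_im_bounds (cs_bound (hcomm 2 0) a b)
  obtain ⟨h4a, h4b, h4c, h4d⟩ := re_im_bounds (cs_bound (hcomm 2 0) b a)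
  obtain ⟨h5a, h5b, h5c, h5d⟩ := re_im_bounds (cs_bound (hcomm 1 2) a b)
  obtain ⟨h6a, h6b, h6c, h6d⟩ := re_im_bounds (cs_bound (hcomm 1 2) b a)
  -- take real parts
  have R := congrArg Complex.re KI
  simp only [Complex.add_re, Complex.sub_re, Complex.mul_re, Complex.mul_im,
    Complex.I_re, Complex.I_im, Complex.ofReal_re, Complex.ofReal_im,
    zero_mul, mul_zero, one_mul, zero_sub, sub_zero, zero_add, add_zero, neg_neg] at R
  have hc2 : c ^ 2 ≤ μ ^ 2 := by
    have h := sq_abs c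
    nlinarith [abs_nonneg c]
  have hmono : c ^ 2 * ‖fE a‖ ^ 2 + c ^ 2 * ‖fE b‖ ^ 2
      ≤ μ ^ 2 * ‖fE a‖ ^ 2 + μ ^ 2 * ‖fE b‖ ^ 2 := by
    have g1 := mul_le_mul_of_nonneg_right hc2 (sq_nonneg ‖fE a‖)
    have g2 := mul_le_mul_of_nonneg_right hc2 (sq_nonneg ‖fE b‖)
    linarith
  have hcross : 2 * (δ * ‖fE a‖ * ‖fE b‖) ≤ δ * ‖fE a‖ ^ 2 + δ * ‖fE b‖ ^ 2 := by
    nlinarith [mul_nonneg hδpos.le (sq_nonneg (‖fE a‖ - ‖fE b‖))]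
  -- the summed bound
  have hSum : ‖fE ((A 0 - (lam 0 : ℂ) • 1) *ᵥ a)‖ ^ 2 + ‖fE ((A 1 - (lam 1 : ℂ) • 1) *ᵥ a)‖ ^ 2
      + ‖fE ((A 2 - (lam 2 : ℂ) • 1) *ᵥ a)‖ ^ 2 + ‖fE ((A 0 - (lam 0 : ℂ) • 1) *ᵥ b)‖ ^ 2
      + ‖fE ((A 1 - (lam 1 : ℂ) • 1) *ᵥ b)‖ ^ 2 + ‖fE ((A 2 - (lam 2 : ℂ) • 1) *ᵥ b)‖ ^ 2
      ≤ (μ ^ 2 + 3 * δ) * (‖fE a‖ ^ 2 + ‖fE b‖ ^ 2) := by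
    linarith [R, h1c, h1d, h2c, h2d, h3a, h3b, h4a, h4b, h5c, h5d, h6c, h6d, hmono, hcross]
  -- positivity of norms of nonzero vectors
  have hnorm_pos : ∀ x : Fin N → ℂ, x ≠ 0 → 0 < ‖fE x‖ := by
    intro x hx
    rw [norm_pos_iff]
    intro h0
    exact hx ((WithLp.equiv 2 (Fin N → ℂ)).symm.injective h0)
  have hab : a ≠ 0 ∨ b ≠ 0 := by
    by_contra hcon
    push_neg at hcon
    apply hu0
    funext p
    obtain ⟨i, k⟩ := p
    fin_cases i
    · exact congrFun hcon.1 k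
    · exact congrFun hcon.2 k
  have hzero : ∀ x : Fin N → ℂ, x = 0 → ∀ M : Matrix (Fin N) (Fin N) ℂ,
      ‖fE (M *ᵥ x)‖ ^ 2 = 0 := by
    intro x hx M
    rw [hx]
    rw [Matrix.mulVec_zero]
    simp [fE]
  have hzero' : ∀ x : Fin N → ℂ, x = 0 → ‖fE x‖ ^ 2 = 0 := by
    intro x hx
    rw [hx]
    simp [fE]
  -- select the good component
  obtain ⟨x, hx0, hxS⟩ : ∃ x : Fin N → ℂ, x ≠ 0 ∧
      ‖fE ((A 0 - (lam 0 : ℂ) • 1) *ᵥ x)‖ ^ 2 + ‖fE ((A 1 - (lam 1 : ℂ) • 1) *ᵥ x)‖ ^ 2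
        + ‖fE ((A 2 - (lam 2 : ℂ) • 1) *ᵥ x)‖ ^ 2 ≤ (μ ^ 2 + 3 * δ) * ‖fE x‖ ^ 2 := by
    by_cases ha0 : a = 0
    · have hb0 : b ≠ 0 := by tauto
      refine ⟨b, hb0, ?_⟩
      have z0 := hzero a ha0 (A 0 - (lam 0 : ℂ) • 1)
      have z1 := hzero a ha0 (A 1 - (lam 1 : ℂ) • 1)
      have z2 := hzero a ha0 (A 2 - (lam 2 : ℂ) • 1)
      have z3 := hzero' a ha0
      have z4 : (μ ^ 2 + 3 * δ) * ‖fE a‖ ^ 2 = 0 := by rw [z3, mul_zero]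
      linarith [hSum]
    · by_cases hgood : ‖fE ((A 0 - (lam 0 : ℂ) • 1) *ᵥ a)‖ ^ 2
          + ‖fE ((A 1 - (lam 1 : ℂ) • 1) *ᵥ a)‖ ^ 2
          + ‖fE ((A 2 - (lam 2 : ℂ) • 1) *ᵥ a)‖ ^ 2 ≤ (μ ^ 2 + 3 * δ) * ‖fE a‖ ^ 2
      · exact ⟨a, ha0, hgood⟩
      · push_neg at hgood
        have hb0 : b ≠ 0 := by
          intro hb0
          apply absurd hgood
          push_neg
          have z0 := hzero b hb0 (A 0 - (lam 0 : ℂ) • 1)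
          have z1 := hzero b hb0 (A 1 - (lam 1 : ℂ) • 1)
          have z2 := hzero b hb0 (A 2 - (lam 2 : ℂ) • 1)
          have z3 := hzero' b hb0
          have z4 : (μ ^ 2 + 3 * δ) * ‖fE b‖ ^ 2 = 0 := by rw [z3, mul_zero]
          linarith [hSum]
        refine ⟨b, hb0, by linarith [hSum]⟩
  -- per-component bounds
  have hr : 0 < ‖fE x‖ := hnorm_pos x hx0
  have hj0 : ‖fE ((A 0 - (lam 0 : ℂ) • 1) *ᵥ x)‖ ^ 2 ≤ (μ ^ 2 + 3 * δ) * ‖fE x‖ ^ 2 := by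
    linarith [hxS, sq_nonneg ‖fE ((A 1 - (lam 1 : ℂ) • 1) *ᵥ x)‖,
      sq_nonneg ‖fE ((A 2 - (lam 2 : ℂ) • 1) *ᵥ x)‖]
  have hj1 : ‖fE ((A 1 - (lam 1 : ℂ) • 1) *ᵥ x)‖ ^ 2 ≤ (μ ^ 2 + 3 * δ) * ‖fE x‖ ^ 2 := by
    linarith [hxS, sq_nonneg ‖fE ((A 0 - (lam 0 : ℂ) • 1) *ᵥ x)‖,
      sq_nonneg ‖fE ((A 2 - (lam 2 : ℂ) • 1) *ᵥ x)‖]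
  have hj2 : ‖fE ((A 2 - (lam 2 : ℂ) • 1) *ᵥ x)‖ ^ 2 ≤ (μ ^ 2 + 3 * δ) * ‖fE x‖ ^ 2 := by
    linarith [hxS, sq_nonneg ‖fE ((A 0 - (lam 0 : ℂ) • 1) *ᵥ x)‖,
      sq_nonneg ‖fE ((A 1 - (lam 1 : ℂ) • 1) *ᵥ x)‖]
  -- the normalized vector
  set w : Fin N → ℂ := ((‖fE x‖⁻¹ : ℝ) : ℂ) • x with hw
  have main : ∀ M : Matrix (Fin N) (Fin N) ℂ,
      ‖fE (M *ᵥ x)‖ ^ 2 ≤ (μ ^ 2 + 3 * δ) * ‖fE x‖ ^ 2 →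
      ‖fE (M *ᵥ w)‖ ≤ (μ ^ 2 + 3 * δ) ^ ((1 : ℝ)/2) := by
    intro M hM
    have hmv : M *ᵥ w = ((‖fE x‖⁻¹ : ℝ) : ℂ) • (M *ᵥ x) := Matrix.mulVec_smul M _ x
    have hfe : fE (((‖fE x‖⁻¹ : ℝ) : ℂ) • (M *ᵥ x))
        = ((‖fE x‖⁻¹ : ℝ) : ℂ) • fE (M *ᵥ x) := rfl
    rw [hmv, hfe, norm_smul, ← Real.sqrt_eq_rpow]
    apply Real.le_sqrt_of_sq_le
    have hnc : ‖((‖fE x‖⁻¹ : ℝ) : ℂ)‖ = ‖fE x‖⁻¹ := by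
      rw [Complex.norm_real, Real.norm_eq_abs, abs_of_nonneg (inv_nonneg.mpr (norm_nonneg _))]
    rw [hnc, mul_pow]
    have hle : (‖fE x‖⁻¹) ^ 2 * ‖fE (M *ᵥ x)‖ ^ 2
        ≤ (‖fE x‖⁻¹) ^ 2 * ((μ ^ 2 + 3 * δ) * ‖fE x‖ ^ 2) :=
      mul_le_mul_of_nonneg_left hM (by positivity)
    have heq : (‖fE x‖⁻¹) ^ 2 * ((μ ^ 2 + 3 * δ) * ‖fE x‖ ^ 2) = μ ^ 2 + 3 * δ := by
      field_simp
    linarith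
  refine ⟨fE w, ?_, ?_⟩
  · have : fE w = ((‖fE x‖⁻¹ : ℝ) : ℂ) • fE x := rfl
    rw [this, norm_smul, Complex.norm_real, Real.norm_eq_abs, abs_of_nonneg (inv_nonneg.mpr (norm_nonneg _))]
    field_simp
  · intro j
    have g0 := main _ hj0
    have g1 := main _ hj1
    have g2 := main _ hj2
    fin_cases j
    · exact g0
    · exact g1
    · exact g2

end
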